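/- arXiv:1312.7667 — 5 statements merged into one kernel-verified Lean document; each statement's English description precedes it below -/
import Mathlib

section
/- Let G be a non-locally compact abelian Polish group and let C ⊆ G be a fixed compact set. Then there exists a Borel map t : K(G) × 2^ω × 2^ω → G such that: (1) whenever (K, x, y) ≠ (K', x', y') are elements of K(G) × 2^ω × 2^ω, the sets K − C + t(K, x, y) and K' − C + t(K', x', y') are disjoint; and (2) for every K ∈ K(G) and y ∈ 2^ω, the map x ↦ t(K, x, y) is continuous on 2^ω. -/
open MeasureTheory Topology TopologicalSpace Pointwise

noncomputable def natRecAux {α : Type*} (P : ∀ n : ℕ, (Fin n → α) → α) : ℕ → α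
  | n => P n (fun i => natRecAux P i)
  decreasing_by exact i.2

theorem natRecAux_eq {α : Type*} (P : ∀ n : ℕ, (Fin n → α) → α) (n : ℕ) :
    natRecAux P n = P n (fun i => natRecAux P i) := by rw [natRecAux]

open Metric Set Filter

/-- Let `G` be a non-locally compact abelian Polish group, with a fixed complete two-sided
invariant metric, and let `C ⊆ G` be a fixed compact set. Then there is a Borel map
`t : K(G) × 2^ω × 2^ω → G` (where `K(G)` is the space of nonempty compact subsets of `G` with
the Hausdorff metric and its Borel σ-algebra) such that: (1) for distinct triples
`(K, x, y) ≠ (K', x', y')` the sets `K - C + t(K,x,y)` and `K' - C + t(K',x',y')` are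
disjoint; and (2) for all `K` and `y`, the map `x ↦ t(K, x, y)` is continuous. -/
theorem exists_borel_disjointifying_translation
    {G : Type*} [MetricSpace G] [CompleteSpace G] [SecondCountableTopology G]
    [AddCommGroup G] [IsTopologicalAddGroup G] [MeasurableSpace G] [BorelSpace G]
    (hinv : ∀ a b c : G, dist (a + c) (b + c) = dist a b)
    (hG : ¬ LocallyCompactSpace G)
    (C : Set G) (hC : IsCompact C) :
    letI : MeasurableSpace (NonemptyCompacts G) := borel (NonemptyCompacts G)
    ∃ t : NonemptyCompacts G × (ℕ → Bool) × (ℕ → Bool) → G,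
      Measurable t ∧
      (∀ p q : NonemptyCompacts G × (ℕ → Bool) × (ℕ → Bool), p ≠ q →
        Disjoint ((p.1 : Set G) - C + {t p}) ((q.1 : Set G) - C + {t q})) ∧
      (∀ (K : NonemptyCompacts G) (y : ℕ → Bool),
        Continuous fun x : ℕ → Bool => t (K, x, y)) := by
  letI : MeasurableSpace (NonemptyCompacts G) := borel (NonemptyCompacts G)
  haveI : BorelSpace (NonemptyCompacts G) := ⟨rfl⟩
  have dtr : ∀ x y : G, dist (x + y) x = dist y 0 := by
    intro x y
    have := hinv y 0 x
    simpa [add_comm] using this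
  have dsub0 : ∀ x y : G, dist (x - y) 0 = dist x y := by
    intro x y
    rw [← hinv (x - y) 0 y]; simp
  have dnegneg : ∀ x y : G, dist (-x) (-y) = dist x y := by
    intro x y
    have h := hinv (-x) (-y) (x + y)
    rw [show -x + (x + y) = y from by abel, show -y + (x + y) = x from by abel] at h
    rw [← h, dist_comm]
  have dneg0 : ∀ x : G, dist (-x) 0 = dist x 0 := by
    intro x
    have := dnegneg x 0; simpa using this
  have dadd0 : ∀ x y : G, dist (x + y) 0 ≤ dist x 0 + dist y 0 := by
    intro x y
    calc dist (x + y) 0 ≤ dist (x + y) x + dist x 0 := dist_triangle _ _ _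
    _ = dist y 0 + dist x 0 := by rw [dtr]
    _ = dist x 0 + dist y 0 := by ring
  have dshift : ∀ x y c : G, dist (x + c) (y + c) = dist x y := fun x y c => hinv x y c
  have dsubsub : ∀ x x' y y' : G, dist (x - y) (x' - y') ≤ dist x x' + dist y y' := by
    intro x x' y y'
    have h1 : dist (x - y) (x' - y) = dist x x' := by
      have := dshift x x' (-y); simpa [sub_eq_add_neg] using this
    have h2 : dist (x' - y) (x' - y') = dist y y' := by
      rw [show x' - y = -y + x' from by abel, show x' - y' = -y' + x' from by abel,
        dshift, dnegneg]
    calc dist (x - y) (x' - y') ≤ dist (x - y) (x' - y) + dist (x' - y) (x' - y') :=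
        dist_triangle _ _ _
    _ = dist x x' + dist y y' := by rw [h1, h2]
  have hnc : ∀ ε : ℝ, 0 < ε → ¬ IsCompact (closedBall (0:G) ε) := by
    intro ε hε hcomp
    apply hG
    have himg : ∀ (x : G) (δ : ℝ), closedBall x δ = (fun g => g + x) '' closedBall (0:G) δ := by
      intro x δ
      ext v
      simp only [Set.mem_image, mem_closedBall]
      constructor
      · intro hv
        refine ⟨v - x, ?_, by abel⟩
        rw [dsub0]; exact hv
      · rintro ⟨g, hg, rfl⟩
        rw [add_comm g x, dtr x g]; exact hg
    have hcball : ∀ (x : G) (δ : ℝ), 0 < δ → δ ≤ ε → IsCompact (closedBall x δ) := by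
      intro x δ _ hδε
      rw [himg]
      exact ((hcomp.of_isClosed_subset isClosed_closedBall
        (closedBall_subset_closedBall hδε)).image (continuous_id.add continuous_const))
    have hbasis : ∀ x : G, (𝓝 x).HasBasis (fun δ : ℝ => 0 < δ ∧ δ ≤ ε) (closedBall x) := by
      intro x
      refine (nhds_basis_closedBall (x := x)).to_hasBasis (fun δ hδ => ?_) (fun δ hδ => ?_)
      · exact ⟨min δ ε, ⟨lt_min hδ hε, min_le_right _ _⟩,
          closedBall_subset_closedBall (min_le_left _ _)⟩
      · exact ⟨δ, hδ.1, subset_rfl⟩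
    exact LocallyCompactSpace.of_hasBasis hbasis (fun x δ hδ => hcball x δ hδ.1 hδ.2)
  -- not totally bounded
  have htb : ∀ ε : ℝ, 0 < ε → ¬ TotallyBounded (closedBall (0:G) ε) := by
    intro ε hε h
    exact hnc ε hε (TotallyBounded.isCompact_of_isClosed h isClosed_closedBall)
  -- avoidance radius
  have havoid : ∀ ε : ℝ, ∃ ρ : ℝ, 0 < ρ ∧ (0 < ε → ρ ≤ ε ∧
      ∀ F : Set G, IsCompact F → ∃ g : G, dist g 0 ≤ ε ∧
        g ∉ F + closedBall (0:G) (ρ/2)) := by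
    intro ε
    rcases le_or_gt ε 0 with hε | hε
    · exact ⟨1, one_pos, fun h => absurd h (not_lt.2 hε)⟩
    · obtain ⟨r, hr, hcov⟩ : ∃ r : ℝ, 0 < r ∧ ∀ s : Set G, s.Finite →
          ¬ closedBall (0:G) ε ⊆ ⋃ y ∈ s, ball y r := by
        have := htb ε hε
        rw [totallyBounded_iff] at this
        push_neg at this
        obtain ⟨r, hr, hcov⟩ := this
        exact ⟨r, hr, fun s hs hsub => hcov s hs hsub⟩
      refine ⟨min r ε, lt_min hr hε, fun _ => ⟨min_le_right _ _, ?_⟩⟩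
      intro F hF
      set ρ := min r ε with hρdef
      have hρ : 0 < ρ := lt_min hr hε
      by_contra hcon
      push_neg at hcon
      obtain ⟨s, hsfin, hscov⟩ := (totallyBounded_iff.1 hF.totallyBounded) (ρ/4) (by positivity)
      apply hcov s hsfin
      intro v hv
      have hvF : v ∈ F + closedBall (0:G) (ρ/2) := hcon v hv
      rw [Set.mem_add] at hvF
      obtain ⟨f, hf, w, hw, rfl⟩ := hvF
      have hfs := hscov hf
      rw [Set.mem_iUnion₂] at hfs
      obtain ⟨cpt, hcs, hfc⟩ := hfs
      rw [Set.mem_iUnion₂]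
      refine ⟨cpt, hcs, ?_⟩
      rw [mem_ball]
      have h1 : dist (f + w) f = dist w 0 := dtr f w
      calc dist (f + w) cpt ≤ dist (f + w) f + dist f cpt := dist_triangle _ _ _
      _ < ρ/2 + ρ/4 := by
          rw [h1]
          exact add_lt_add_of_le_of_lt (by simpa [mem_closedBall] using hw) (by simpa [mem_ball] using hfc)
      _ ≤ r := by
          have h2 : ρ ≤ r := min_le_left _ _
          linarith
      
  clear hnc htb
  choose R hRpos hRspec using havoid
  set eps : ℕ → ℝ := fun n => Nat.rec (1:ℝ) (fun _ e => min (e/2) (R e/16)) n with heps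
  have heps0 : eps 0 = 1 := rfl
  have hepssucc : ∀ n, eps (n+1) = min (eps n/2) (R (eps n)/16) := fun n => rfl
  have hepspos : ∀ n, 0 < eps n := by
    intro n; induction n with
    | zero => norm_num [heps0]
    | succ n ih =>
        rw [hepssucc]
        exact lt_min (by linarith) (by have := hRpos (eps n); linarith)
  set gam : ℕ → ℝ := fun n => R (eps n) / 2 with hgam
  set aa : ℕ → ℝ := fun n => gam n / 4 with haa
  have hgampos : ∀ n, 0 < gam n := fun n => by have := hRpos (eps n); simp [hgam]; linarith
  have haapos : ∀ n, 0 < aa n := fun n => by have := hgampos n; simp [haa]; linarith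
  have heps_half : ∀ n, eps (n+1) ≤ eps n / 2 := fun n => by rw [hepssucc]; exact min_le_left _ _
  have heps_gam : ∀ n, eps (n+1) ≤ gam n / 8 := fun n => by
    have h2 : gam n / 8 = R (eps n)/16 := by rw [hgam]; ring
    rw [hepssucc, h2]; exact min_le_right _ _
  have hRle : ∀ n, R (eps n) ≤ eps n := fun n => (hRspec _ (hepspos n)).1
  have havd : ∀ n (F : Set G), IsCompact F → ∃ g : G, dist g 0 ≤ eps n ∧
      g ∉ F + closedBall (0:G) (gam n) := by
    intro n F hF
    have := (hRspec _ (hepspos n)).2 F hF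
    simpa [hgam] using this
  have heps_pow : ∀ n, eps n ≤ (1/2)^n := by
    intro n; induction n with
    | zero => simp [heps0]
    | succ n ih =>
        have := heps_half n
        calc eps (n+1) ≤ eps n / 2 := this
        _ ≤ (1/2)^n / 2 := by linarith
        _ = (1/2)^(n+1) := by ring
  have hgam_le : ∀ n, gam n ≤ eps n := fun n => by
    have h1 := hRle n; have h2 := hRpos (eps n); simp [hgam]; linarith
  -- dense sequence in K(G)
  haveI : Nonempty (NonemptyCompacts G) := ⟨⟨⟨{0}, isCompact_singleton⟩, Set.singleton_nonempty 0⟩⟩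
  obtain ⟨u, hu⟩ := TopologicalSpace.exists_dense_seq (NonemptyCompacts G)
  have hcex : ∀ (n : ℕ) (K : NonemptyCompacts G), ∃ i, dist K (u i) < aa n :=
    fun n K => hu.exists_dist_lt K (haapos n)
  set c : ℕ → NonemptyCompacts G → ℕ := fun n K => Nat.find (hcex n K) with hc
  have hcdist : ∀ n K, dist K (u (c n K)) < aa n := fun n K => Nat.find_spec (hcex n K)
  -- target compact sets
  set Dset : ℕ → ℕ → Set G := fun i j => ((u i : Set G) - C) - ((u j : Set G) - C) with hDset
  have hsubc : ∀ s t : Set G, IsCompact s → IsCompact t → IsCompact (s - t) := by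
    intro s t hs ht; rw [sub_eq_add_neg]; exact hs.add ht.neg
  have hDc : ∀ i j, IsCompact (Dset i j) :=
    fun i j => hsubc _ _ (hsubc _ _ (u i).isCompact hC) (hsubc _ _ (u j).isCompact hC)
  -- greedy construction
  set didx : ℕ → ℕ := fun k =>
    ((Encodable.decode (α := ℕ × Bool × Bool) k).map Prod.fst).getD 0 with hdidx
  have hex : ∀ (n k : ℕ) (prev : Fin k → G), ∃ g : G, dist g 0 ≤ eps n ∧ ∀ i : Fin k,
      g - prev i ∉ Dset (didx i) (didx k) + closedBall (0:G) (gam n) ∧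
      prev i - g ∉ Dset (didx k) (didx i) + closedBall (0:G) (gam n) := by
    intro n k prev
    set F : Set G := ⋃ i : Fin k,
      (({prev i} + Dset (didx i) (didx k)) ∪ ({prev i} - Dset (didx k) (didx i))) with hF
    have hFc : IsCompact F := isCompact_iUnion fun i =>
      ((isCompact_singleton.add (hDc _ _)).union (hsubc _ _ isCompact_singleton (hDc _ _)))
    obtain ⟨g, hg1, hg2⟩ := havd n F hFc
    refine ⟨g, hg1, fun i => ⟨?_, ?_⟩⟩
    · intro hmem
      rw [Set.mem_add] at hmem
      obtain ⟨d, hd, w, hw, hdw⟩ := hmem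
      apply hg2
      rw [Set.mem_add]
      have h3 : d + w + prev i = g := eq_sub_iff_add_eq.1 hdw
      refine ⟨prev i + d, ?_, w, hw, by rw [← h3]; abel⟩
      exact Set.mem_iUnion.2 ⟨i, Or.inl (Set.add_mem_add rfl hd)⟩
    · intro hmem
      rw [Set.mem_add] at hmem
      obtain ⟨d, hd, w, hw, hdw⟩ := hmem
      apply hg2
      rw [Set.mem_add]
      have h3 : d + w + g = prev i := eq_sub_iff_add_eq.1 hdw
      refine ⟨prev i - d, ?_, -w, ?_, by rw [← h3]; abel⟩
      · exact Set.mem_iUnion.2 ⟨i, Or.inr (Set.sub_mem_sub rfl hd)⟩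
      · rw [mem_closedBall, dneg0]; exact hw
  set H : ℕ → ℕ → G := fun n => natRecAux (fun k prev => Classical.choose (hex n k prev)) with hHdef
  have hH : ∀ n k, dist (H n k) 0 ≤ eps n ∧ ∀ i : Fin k,
      H n k - H n i ∉ Dset (didx i) (didx k) + closedBall (0:G) (gam n) ∧
      H n i - H n k ∉ Dset (didx k) (didx i) + closedBall (0:G) (gam n) := by
    intro n k
    have heq : H n k = Classical.choose (hex n k (fun i => H n i)) := by
      rw [hHdef]; exact natRecAux_eq _ k
    rw [heq]
    exact Classical.choose_spec (hex n k (fun i : Fin k => H n i))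
  have hsepN : ∀ (n : ℕ) (i k : ℕ), i ≠ k →
      H n i - H n k ∉ Dset (didx k) (didx i) + closedBall (0:G) (gam n) := by
    intro n i k hik
    rcases lt_or_gt_of_ne hik with h | h
    · exact ((hH n k).2 ⟨i, h⟩).2
    · exact ((hH n i).2 ⟨k, h⟩).1
  -- relabeled construction
  set h : ℕ → ℕ × Bool × Bool → G := fun n a => H n (Encodable.encode a) with hhdef
  have hhnorm : ∀ n a, dist (h n a) 0 ≤ eps n := fun n a => (hH n _).1
  have hsepA : ∀ (n : ℕ) (a b : ℕ × Bool × Bool), a ≠ b →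
      h n a - h n b ∉ Dset b.1 a.1 + closedBall (0:G) (gam n) := by
    intro n a b hab
    have henc : Encodable.encode a ≠ Encodable.encode b :=
      fun hh => hab (Encodable.encode_injective hh)
    have h1 : didx (Encodable.encode a) = a.1 := by
      show ((Encodable.decode (α := ℕ × Bool × Bool) (Encodable.encode a)).map Prod.fst).getD 0 = a.1
      rw [Encodable.encodek]; rfl
    have h2 : didx (Encodable.encode b) = b.1 := by
      show ((Encodable.decode (α := ℕ × Bool × Bool) (Encodable.encode b)).map Prod.fst).getD 0 = b.1
      rw [Encodable.encodek]; rfl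
    have := hsepN n (Encodable.encode a) (Encodable.encode b) henc
    rwa [h1, h2] at this
  -- codes and partial sums
  set z : NonemptyCompacts G × (ℕ → Bool) × (ℕ → Bool) → ℕ → ℕ × Bool × Bool :=
    fun p n => (c n p.1, p.2.1 n, p.2.2 n) with hz
  set S : ℕ → NonemptyCompacts G × (ℕ → Bool) × (ℕ → Bool) → G :=
    fun N p => ∑ m ∈ Finset.range N, h m (z p m) with hS
  have hSstep : ∀ (N : ℕ) p, dist (S N p) (S (N+1) p) = dist (h N (z p N)) 0 := by
    intro N p
    simp only [hS, Finset.sum_range_succ]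
    rw [dist_comm]
    exact dtr _ _
  have hSdiff : ∀ (N k : ℕ) p, dist (S N p) (S (N+k) p) ≤ 2*(eps N) - 2*(eps (N+k)) := by
    intro N k p
    induction k with
    | zero => simp
    | succ k ih =>
        have h1 := hSstep (N+k) p
        have h2 := hhnorm (N+k) (z p (N+k))
        have h3 := heps_half (N+k)
        have hh4 : dist (S N p) (S (N+(k+1)) p) ≤ dist (S N p) (S (N+k) p) + dist (S (N+k) p) (S ((N+k)+1) p) := by
          rw [show N+(k+1) = (N+k)+1 from rfl]
          exact dist_triangle _ _ _
        rw [show N+(k+1) = (N+k)+1 from rfl]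
        calc dist (S N p) (S ((N+k)+1) p) ≤ dist (S N p) (S (N+k) p) + dist (S (N+k) p) (S ((N+k)+1) p) := hh4
        _ ≤ (2*eps N - 2*eps (N+k)) + eps (N+k) := by rw [h1]; exact add_le_add ih h2
        _ ≤ 2*eps N - 2*eps ((N+k)+1) := by linarith
  have hSle : ∀ (N M : ℕ) p, N ≤ M → dist (S N p) (S M p) ≤ 2 * eps N := by
    intro N M p hNM
    obtain ⟨k, rfl⟩ := Nat.exists_eq_add_of_le hNM
    have := hSdiff N k p
    have := hepspos (N + k)
    linarith
  have hcau : ∀ p, CauchySeq (fun N => S N p) := by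
    intro p
    apply cauchySeq_of_le_geometric (1/2 : ℝ) 1 (by norm_num)
    intro n
    rw [hSstep n p]
    calc dist (h n (z p n)) 0 ≤ eps n := hhnorm _ _
    _ ≤ (1/2)^n := heps_pow n
    _ = 1 * (1/2)^n := by ring
  choose t ht using fun p => cauchySeq_tendsto_of_complete (hcau p)
  have htail : ∀ (N : ℕ) p, dist (S N p) (t p) ≤ 2 * eps N := by
    intro N p
    have h1 : Tendsto (fun M => dist (S N p) (S M p)) atTop (𝓝 (dist (S N p) (t p))) :=
      tendsto_const_nhds.dist (ht p)
    exact le_of_tendsto h1 (eventually_atTop.2 ⟨N, fun M hM => hSle N M p hM⟩)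
  -- measurability
  have hcmeas : ∀ n, Measurable (c n) := by
    intro n
    apply measurable_to_countable'
    intro i
    have hset : (c n) ⁻¹' {i} =
        {K : NonemptyCompacts G | dist K (u i) < aa n} ∩
          ⋂ (j : ℕ) (_ : j < i), {K : NonemptyCompacts G | dist K (u j) < aa n}ᶜ := by
      ext K
      simp only [Set.mem_preimage, Set.mem_singleton_iff, hc, Nat.find_eq_iff (hcex n K),
        Set.mem_inter_iff, Set.mem_iInter, Set.mem_setOf_eq, Set.mem_compl_iff]
    rw [hset]
    have hop : ∀ j : ℕ, IsOpen {K : NonemptyCompacts G | dist K (u j) < aa n} :=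
      fun j => isOpen_lt (Continuous.dist continuous_id continuous_const) continuous_const
    exact ((hop i).measurableSet).inter
      (MeasurableSet.iInter fun j => MeasurableSet.iInter fun _ => ((hop j).measurableSet).compl)
  have hSmeas : ∀ N, Measurable (S N) := by
    intro N
    apply Finset.measurable_sum
    intro m _
    have hzm : Measurable (fun p : NonemptyCompacts G × (ℕ → Bool) × (ℕ → Bool) => z p m) := by
      refine Measurable.prod ?_ (Measurable.prod ?_ ?_)
      · exact (hcmeas m).comp measurable_fst
      · exact (measurable_pi_apply m).comp (measurable_fst.comp measurable_snd)
      · exact (measurable_pi_apply m).comp (measurable_snd.comp measurable_snd)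
    exact (measurable_of_countable (h m)).comp hzm
  have htmeas : Measurable t := by
    apply measurable_of_tendsto_metrizable hSmeas
    rw [tendsto_pi_nhds]
    exact ht
  -- continuity in x
  have hcont : ∀ (K : NonemptyCompacts G) (y : ℕ → Bool),
      Continuous fun x : ℕ → Bool => t (K, x, y) := by
    intro K y
    rw [continuous_iff_continuousAt]
    intro x
    rw [ContinuousAt, Metric.tendsto_nhds]
    intro δ hδ
    obtain ⟨N, hN⟩ : ∃ N : ℕ, (1/2:ℝ)^N < δ/4 := by
      obtain ⟨N, hN⟩ := exists_pow_lt_of_lt_one (show (0:ℝ) < δ/4 by linarith) (by norm_num : (1:ℝ)/2 < 1)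
      exact ⟨N, hN⟩
    have hVmem : {x' : ℕ → Bool | ∀ i ∈ Finset.range N, x' i = x i} ∈ 𝓝 x := by
      have : {x' : ℕ → Bool | ∀ i ∈ Finset.range N, x' i = x i} =
          ⋂ i ∈ Finset.range N, (fun x' : ℕ → Bool => x' i) ⁻¹' {x i} := by
        ext x'; simp
      rw [this]
      refine (Filter.biInter_finset_mem _).2 fun i _ => ?_
      exact IsOpen.mem_nhds (((continuous_apply i).isOpen_preimage _ (isOpen_discrete _))) rfl
    filter_upwards [hVmem] with x' hx'
    have hSeq : S N (K, x', y) = S N (K, x, y) := by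
      simp only [hS]
      refine Finset.sum_congr rfl fun m hm => ?_
      simp only [hz]
      rw [hx' m hm]
    have h1 := htail N (K, x', y)
    have h2 := htail N (K, x, y)
    have h3 := heps_pow N
    calc dist (t (K, x', y)) (t (K, x, y)) ≤
        dist (t (K, x', y)) (S N (K, x', y)) + dist (S N (K, x, y)) (t (K, x, y)) := by
          rw [hSeq] at *
          exact dist_triangle _ _ _
    _ ≤ 2 * eps N + 2 * eps N := by rw [dist_comm (t (K, x', y))]; exact add_le_add h1 h2
    _ < δ := by linarith
  -- injectivity of codes
  have hzinj : ∀ p q : NonemptyCompacts G × (ℕ → Bool) × (ℕ → Bool),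
      (∀ n, z p n = z q n) → p = q := by
    intro p q hpq
    have hx : p.2.1 = q.2.1 := funext fun n => congrArg (fun a : ℕ × Bool × Bool => a.2.1) (hpq n)
    have hy : p.2.2 = q.2.2 := funext fun n => congrArg (fun a : ℕ × Bool × Bool => a.2.2) (hpq n)
    have hc' : ∀ n, c n p.1 = c n q.1 := fun n => congrArg Prod.fst (hpq n)
    have hK : p.1 = q.1 := by
      have hd : ∀ n : ℕ, dist p.1 q.1 ≤ 2 * aa n := by
        intro n
        calc dist p.1 q.1 ≤ dist p.1 (u (c n p.1)) + dist (u (c n p.1)) q.1 := dist_triangle _ _ _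
        _ ≤ aa n + aa n := by
            refine add_le_add (le_of_lt (hcdist n p.1)) ?_
            rw [hc' n, dist_comm]
            exact le_of_lt (hcdist n q.1)
        _ = 2 * aa n := by ring
      have hbound : ∀ n : ℕ, 2 * aa n ≤ 2 * (1/2)^n := by
        intro n
        have h1 := hgam_le n
        have h2 := heps_pow n
        have h3 : aa n = gam n / 4 := rfl
        have h4 := hgampos n
        rw [h3]; linarith
      have hlim : Tendsto (fun n : ℕ => 2 * aa n) atTop (𝓝 0) := by
        apply squeeze_zero (fun n => by have := haapos n; linarith) hbound
        have := tendsto_pow_atTop_nhds_zero_of_lt_one (le_of_lt one_half_pos)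
          (by norm_num : (1/2 : ℝ) < 1)
        simpa using this.const_mul 2
      have hle : dist p.1 q.1 ≤ 0 := ge_of_tendsto hlim (Filter.Eventually.of_forall hd)
      exact dist_le_zero.1 hle
    exact Prod.ext_iff.2 ⟨hK, Prod.ext_iff.2 ⟨hx, hy⟩⟩
  -- disjointness
  have hdisj : ∀ p q : NonemptyCompacts G × (ℕ → Bool) × (ℕ → Bool), p ≠ q →
      Disjoint ((p.1 : Set G) - C + {t p}) ((q.1 : Set G) - C + {t q}) := by
    intro p q hpq
    rw [Set.disjoint_left]
    intro w hwp hwq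
    rw [Set.mem_add] at hwp hwq
    obtain ⟨vp, hvp, tp', htp', hwp'⟩ := hwp
    obtain ⟨vq, hvq, tq', htq', hwq'⟩ := hwq
    rw [Set.mem_singleton_iff] at htp' htq'
    subst htp'; subst htq'
    rw [Set.mem_sub] at hvp hvq
    obtain ⟨kp, hkp, cp, hcp, hkcp⟩ := hvp
    obtain ⟨kq, hkq, cq, hcq, hkcq⟩ := hvq
    have hts : t p - t q = (kq - cq) - (kp - cp) := by
      have h5 : (kp - cp) + t p = (kq - cq) + t q := by
        rw [hkcp, hkcq, hwp', hwq']
      rw [sub_eq_sub_iff_add_eq_add, add_comm (t p) (kp - cp)]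
      exact h5
    have hdiffz : ∃ n, z p n ≠ z q n := by
      by_contra hno
      push_neg at hno
      exact hpq (hzinj p q hno)
    set n := Nat.find hdiffz with hn
    have hzn : z p n ≠ z q n := Nat.find_spec hdiffz
    have hzlt : ∀ m, m < n → z p m = z q m := fun m hm => not_not.1 (Nat.find_min hdiffz hm)
    have hQq : dist q.1 (u ((z q n).1)) < aa n := hcdist n q.1
    have hQp : dist p.1 (u ((z p n).1)) < aa n := hcdist n p.1
    have hEq : hausdorffDist (q.1 : Set G) ((u ((z q n).1) : Set G)) < aa n := by
      rw [← NonemptyCompacts.dist_eq]; exact hQq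
    have hEp : hausdorffDist (p.1 : Set G) ((u ((z p n).1) : Set G)) < aa n := by
      rw [← NonemptyCompacts.dist_eq]; exact hQp
    obtain ⟨kq', hkq', hkqd⟩ := exists_dist_lt_of_hausdorffDist_lt hkq hEq
      (hausdorffEdist_ne_top_of_nonempty_of_bounded q.1.nonempty (u ((z q n).1)).nonempty
        q.1.isCompact.isBounded (u ((z q n).1)).isCompact.isBounded)
    obtain ⟨kp', hkp', hkpd⟩ := exists_dist_lt_of_hausdorffDist_lt hkp hEp
      (hausdorffEdist_ne_top_of_nonempty_of_bounded p.1.nonempty (u ((z p n).1)).nonempty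
        p.1.isCompact.isBounded (u ((z p n).1)).isCompact.isBounded)
    have hSn : S n p = S n q := by
      simp only [hS]
      exact Finset.sum_congr rfl fun m hm => by rw [hzlt m (Finset.mem_range.1 hm)]
    have hheads : S (n+1) p - S (n+1) q = h n (z p n) - h n (z q n) := by
      simp only [hS, Finset.sum_range_succ]
      have hSn' : (∑ m ∈ Finset.range n, h m (z p m)) = ∑ m ∈ Finset.range n, h m (z q m) := by
        exact Finset.sum_congr rfl fun m hm => by rw [hzlt m (Finset.mem_range.1 hm)]
      rw [hSn']
      abel
    apply hsepA n (z p n) (z q n) hzn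
    rw [Set.mem_add]
    refine ⟨(kq' - cq) - (kp' - cp), ?_, (h n (z p n) - h n (z q n)) - ((kq' - cq) - (kp' - cp)),
      ?_, by abel⟩
    · exact Set.sub_mem_sub (Set.sub_mem_sub hkq' hcq) (Set.sub_mem_sub hkp' hcp)
    · rw [mem_closedBall, dsub0]
      have e1 : dist (h n (z p n) - h n (z q n)) (t p - t q) ≤ 2*eps (n+1) + 2*eps (n+1) := by
        rw [← hheads]
        calc dist (S (n+1) p - S (n+1) q) (t p - t q)
            ≤ dist (S (n+1) p) (t p) + dist (S (n+1) q) (t q) := dsubsub _ _ _ _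
        _ ≤ 2*eps (n+1) + 2*eps (n+1) := add_le_add (htail _ _) (htail _ _)
      have e2 : dist (t p - t q) ((kq' - cq) - (kp' - cp)) ≤ aa n + aa n := by
        rw [hts]
        have d1 : dist (kq - cq) (kq' - cq) = dist kq kq' := by
          rw [sub_eq_add_neg, sub_eq_add_neg, dshift]
        have d2 : dist (kp - cp) (kp' - cp) = dist kp kp' := by
          rw [sub_eq_add_neg, sub_eq_add_neg, dshift]
        calc dist ((kq - cq) - (kp - cp)) ((kq' - cq) - (kp' - cp))
            ≤ dist (kq - cq) (kq' - cq) + dist (kp - cp) (kp' - cp) := dsubsub _ _ _ _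
        _ ≤ aa n + aa n := by rw [d1, d2]; exact add_le_add hkqd.le hkpd.le
      have e3 := heps_gam n
      have e4 : aa n = gam n / 4 := rfl
      calc dist (h n (z p n) - h n (z q n)) ((kq' - cq) - (kp' - cp))
          ≤ dist (h n (z p n) - h n (z q n)) (t p - t q)
            + dist (t p - t q) ((kq' - cq) - (kp' - cp)) := dist_triangle _ _ _
      _ ≤ (2*eps (n+1) + 2*eps (n+1)) + (aa n + aa n) := add_le_add e1 e2
      _ ≤ gam n := by rw [e4] at e2 ⊢; linarith
  exact ⟨t, htmeas, hdisj, hcont⟩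
end

section
/- Let G be a non-locally compact abelian Polish group with a complete two-sided invariant metric d, and let (Q_k)_{k∈ω} be an increasing sequence of finite subsets of G with 0 ∈ Q_0 and with ⋃_k Q_k dense in G. Then for every ε > 0 there exist δ > 0 and a sequence (g_k)_{k∈ω} of elements of the open ball B(0, ε) such that for all distinct k, k' ∈ ω, d(Q_k + g_k, Q_{k'} + g_{k'}) ≥ δ, where d(A, B) = inf{d(a, b) : a ∈ A, b ∈ B}. -/
open Metric Pointwise

theorem aux_sep_translates {G : Type*} [MetricSpace G] [AddCommGroup G]
    (hinv : ∀ a b c : G, dist (a + c) (b + c) = dist a b)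
    (Q : ℕ → Set G) (hQfin : ∀ k, (Q k).Finite)
    {ε δ : ℝ}
    (hsep : ∀ F : Set G, F.Finite → ∃ g ∈ ball (0:G) ε, ∀ f ∈ F, δ ≤ dist g f) :
    ∃ g : ℕ → G, (∀ k, g k ∈ ball (0:G) ε) ∧
      ∀ k k' : ℕ, k < k' → ∀ a ∈ Q k', ∀ b ∈ Q k, δ ≤ dist (a + g k') (b + g k) := by
  choose gfun hball hsepd using hsep
  set S : (ℕ → G) → ℕ → Set G :=
    fun v n => ⋃ k ∈ Set.Iio n, (fun p : G × G => p.1 + v k - p.2) '' (Q k ×ˢ Q n) with hSdef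
  have hS : ∀ v n, (S v n).Finite := fun v n =>
    (Set.finite_Iio n).biUnion fun k _ => ((hQfin k).prod (hQfin n)).image _
  set F : ℕ → (ℕ → G) := fun n => Nat.rec (motive := fun _ => ℕ → G) (fun _ => 0)
    (fun n v => Function.update v n (gfun (S v n) (hS v n))) n with hFdef
  have hFsucc : ∀ n, F (n+1) = Function.update (F n) n (gfun (S (F n) n) (hS (F n) n)) :=
    fun n => rfl
  set g : ℕ → G := fun k => F (k+1) k with hgdef0
  have hgdef : ∀ k, g k = gfun (S (F k) k) (hS (F k) k) := by
    intro k
    show F (k+1) k = _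
    rw [hFsucc, Function.update_self]
  have hcoh : ∀ n k, k < n → F n k = g k := by
    intro n
    induction n with
    | zero => intro k hk; omega
    | succ n ih =>
      intro k hk
      rcases Nat.lt_succ_iff_lt_or_eq.mp hk with h | rfl
      · rw [hFsucc, Function.update_of_ne (by omega)]
        exact ih k h
      · rfl
  refine ⟨g, fun k => by rw [hgdef]; exact hball _ _, ?_⟩
  intro k k' hkk' a ha b hb
  have hmem : b + F k' k - a ∈ S (F k') k' :=
    Set.mem_biUnion (Set.mem_Iio.mpr hkk') ⟨(b, a), ⟨hb, ha⟩, rfl⟩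
  have h1 := hsepd _ (hS (F k') k') _ hmem
  rw [← hgdef, hcoh k' k hkk'] at h1
  calc δ ≤ dist (g k') (b + g k - a) := h1
    _ = dist (g k' + a) (b + g k - a + a) := (hinv _ _ a).symm
    _ = dist (a + g k') (b + g k) := by rw [add_comm, sub_add_cancel]

/-- Let `G` be a non-locally compact abelian Polish group with a complete two-sided invariant
metric `d = dist`, and let `(Q k)` be an increasing sequence of finite subsets of `G` with
`0 ∈ Q 0` and `⋃ k, Q k` dense in `G`. Then for every `ε > 0` there exist `δ > 0` and a
sequence `(g k)` of elements of the open ball `B(0, ε)` such that for all distinct `k, k'`,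
`d(Q k + g k, Q k' + g k') ≥ δ`, i.e. `dist a b ≥ δ` for all `a ∈ Q k + g k` and
`b ∈ Q k' + g k'`. -/
theorem exists_separated_translates_of_finite_sets
    {G : Type*} [MetricSpace G] [CompleteSpace G] [SecondCountableTopology G]
    [AddCommGroup G] [IsTopologicalAddGroup G]
    (hinv : ∀ a b c : G, dist (a + c) (b + c) = dist a b)
    (hG : ¬ LocallyCompactSpace G)
    (Q : ℕ → Set G) (hQfin : ∀ k, (Q k).Finite) (hQmono : Monotone Q)
    (hQ0 : (0 : G) ∈ Q 0) (hQdense : Dense (⋃ k, Q k))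
    {ε : ℝ} (hε : 0 < ε) :
    ∃ δ > (0 : ℝ), ∃ g : ℕ → G,
      (∀ k, g k ∈ ball (0 : G) ε) ∧
      ∀ k k' : ℕ, k ≠ k' →
        ∀ a ∈ Q k + {g k}, ∀ b ∈ Q k' + {g k'}, δ ≤ dist a b := by
  have key : ∃ δ > (0:ℝ), ∀ F : Set G, F.Finite → ∃ g ∈ ball (0:G) ε, ∀ f ∈ F, δ ≤ dist g f := by
    by_contra h
    push_neg at h
    apply hG
    have htb : TotallyBounded (ball (0:G) ε) := by
      rw [Metric.totallyBounded_iff]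
      intro δ hδ
      obtain ⟨F, hFfin, hF⟩ := h δ hδ
      refine ⟨F, hFfin, fun x hx => ?_⟩
      obtain ⟨f, hf, hd⟩ := hF x hx
      exact Set.mem_biUnion hf hd
    have hc : IsCompact (closure (ball (0:G) ε)) :=
      TotallyBounded.isCompact_of_isClosed htb.closure isClosed_closure
    exact hc.locallyCompactSpace_of_mem_nhds_of_addGroup
      (Filter.mem_of_superset (ball_mem_nhds 0 hε) subset_closure)
  obtain ⟨δ, hδ, hsep⟩ := key
  obtain ⟨g, hball, hg⟩ := aux_sep_translates hinv Q hQfin hsep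
  refine ⟨δ, hδ, g, hball, ?_⟩
  intro k k' hne a ha b hb
  rw [Set.add_singleton] at ha hb
  obtain ⟨x, hx, rfl⟩ := ha
  obtain ⟨y, hy, rfl⟩ := hb
  rcases hne.lt_or_gt with h | h
  · rw [dist_comm]
    exact hg k k' h y hy x hx
  · exact hg k' k h x hx y hy
end

section
/- Let G be an abelian Polish group and let X ⊆ G be Haar null. Then there exist a Borel set B ⊇ X and a Borel probability measure μ on G with compact support such that μ(B + g) = 0 for every g ∈ G; that is, the witness measure in the definition of Haar nullness may always be taken to have compact support. -/
open MeasureTheory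
open Metric TopologicalSpace ENNReal

lemma exists_compact_pos {α : Type*} [MetricSpace α] [CompleteSpace α]
    [SeparableSpace α] [MeasurableSpace α] [OpensMeasurableSpace α]
    (μ : Measure α) [IsProbabilityMeasure μ] :
    ∃ K : Set α, IsCompact K ∧ 0 < μ K := by
  have hne : Nonempty α := by
    by_contra h
    have : μ Set.univ = 0 := by
      simp [Set.univ_eq_empty_iff.2 (not_nonempty_iff.1 h)]
    simp [measure_univ] at this
  obtain ⟨u, hu⟩ := exists_dense_seq α
  -- for each n, find a finite union of closed balls of radius 1/(n+1) of large measure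
  have key : ∀ n : ℕ, ∃ m : ℕ,
      1 - (2⁻¹ : ℝ≥0∞) ^ (n + 2) < μ (⋃ i ∈ Set.Iio m, closedBall (u i) (1 / (n + 1))) := by
    intro n
    set S : ℕ → Set α := fun m => ⋃ i ∈ Set.Iio m, closedBall (u i) (1 / (n + 1)) with hS
    have hmono : Monotone S := by
      intro a b hab
      exact Set.biUnion_subset_biUnion_left fun i hi => lt_of_lt_of_le hi hab
    have hcover : ⋃ m, S m = Set.univ := by
      apply Set.eq_univ_of_forall
      intro x
      have hpos : (0 : ℝ) < 1 / (n + 1) := by positivity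
      obtain ⟨i, hi⟩ := (hu.exists_dist_lt x hpos)
      refine Set.mem_iUnion.2 ⟨i + 1, ?_⟩
      refine Set.mem_biUnion (Nat.lt_succ_self i) ?_
      exact mem_closedBall.2 (le_of_lt (by simpa [dist_comm] using hi))
    have := tendsto_measure_iUnion_atTop (μ := μ) hmono
    rw [hcover, measure_univ] at this
    have hlt : (1 : ℝ≥0∞) - (2⁻¹) ^ (n + 2) < 1 := by
      apply ENNReal.sub_lt_self one_ne_top one_ne_zero
      exact pow_ne_zero _ (by norm_num)
    have := this.eventually (lt_mem_nhds hlt)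
    exact this.exists
  choose m hm using key
  set K : Set α := ⋂ n, ⋃ i ∈ Set.Iio (m n), closedBall (u i) (1 / (n + 1)) with hK
  have hclosed : IsClosed K := by
    apply isClosed_iInter
    intro n
    exact Set.Finite.isClosed_biUnion (Set.finite_Iio _) fun i _ => isClosed_closedBall
  have hcomp : IsCompact K := by
    refine TotallyBounded.isCompact_of_isClosed ?_ hclosed
    rw [Metric.totallyBounded_iff]
    intro ε hε
    obtain ⟨n, hn⟩ := exists_nat_one_div_lt hε
    refine ⟨u '' Set.Iio (m n), (Set.finite_Iio _).image _, ?_⟩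
    intro x hx
    have hx' : x ∈ ⋃ i ∈ Set.Iio (m n), closedBall (u i) (1 / (n + 1)) :=
      Set.mem_iInter.1 hx n
    simp only [Set.mem_iUnion, Finset.mem_range] at hx'
    obtain ⟨i, hi, hxi⟩ := hx'
    refine Set.mem_biUnion ⟨i, hi, rfl⟩ ?_
    exact lt_of_le_of_lt (by simpa using hxi) hn
  refine ⟨K, hcomp, ?_⟩
  have hSmeas : ∀ n, MeasurableSet (⋃ i ∈ Set.Iio (m n), closedBall (u i) (1 / (n + 1))) :=
    fun n => (Set.Finite.isClosed_biUnion (Set.finite_Iio _)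
      fun i _ => isClosed_closedBall).measurableSet
  have hcompl : μ Kᶜ ≤ 2⁻¹ := by
    have h1 : μ Kᶜ ≤ ∑' n, μ (⋃ i ∈ Set.Iio (m n), closedBall (u i) (1 / (n + 1)))ᶜ := by
      rw [hK, Set.compl_iInter]
      exact measure_iUnion_le _
    have h2 : ∀ n, μ (⋃ i ∈ Set.Iio (m n), closedBall (u i) (1 / (n + 1)))ᶜ
        ≤ (2⁻¹ : ℝ≥0∞) ^ (n + 2) := by
      intro n
      rw [prob_compl_eq_one_sub (hSmeas n)]
      have := (hm n).le
      rw [tsub_le_iff_right]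
      calc (1 : ℝ≥0∞) = (1 - (2⁻¹) ^ (n + 2)) + (2⁻¹) ^ (n + 2) := by
            rw [tsub_add_cancel_of_le]
            exact pow_le_one' (by norm_num) _
        _ ≤ μ (⋃ i ∈ Set.Iio (m n), closedBall (u i) (1 / (n + 1))) + (2⁻¹:ℝ≥0∞) ^ (n+2) :=
            add_le_add_left this _
        _ = _ := add_comm _ _
    calc μ Kᶜ ≤ ∑' n, (2⁻¹ : ℝ≥0∞) ^ (n + 2) := h1.trans (ENNReal.tsum_le_tsum h2)
      _ = 2⁻¹ := by
          rw [show (fun n : ℕ => (2⁻¹ : ℝ≥0∞) ^ (n + 2)) = fun n => (2⁻¹:ℝ≥0∞)^2 * 2⁻¹ ^ n by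
            funext n; ring]
          rw [ENNReal.tsum_mul_left, ENNReal.tsum_geometric, ENNReal.one_sub_inv_two,
            inv_inv, sq, mul_assoc,
            ENNReal.inv_mul_cancel (by norm_num) (by norm_num), mul_one]

  by_contra h
  push_neg at h
  have h0 : μ K = 0 := le_antisymm h (zero_le)
  have : μ Kᶜ = 1 := by
    rw [prob_compl_eq_one_sub hclosed.measurableSet, h0, tsub_zero]
  rw [this] at hcompl
  exact absurd hcompl (by norm_num)


/-- A set `X` in an abelian Polish group `G` is *Haar null* if there exist a Borel set `B ⊇ X`
and a Borel probability measure `μ` on `G` such that `μ(B + g) = 0` for every `g ∈ G`. -/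
def IsHaarNull {G : Type*} [AddCommGroup G] [MeasurableSpace G] (X : Set G) : Prop :=
  ∃ B : Set G, MeasurableSet B ∧ X ⊆ B ∧
    ∃ μ : Measure G, IsProbabilityMeasure μ ∧ ∀ g : G, μ ((fun b => b + g) '' B) = 0

/-- The support of a Borel measure `μ`: the smallest closed set of full measure, equivalently
the set of points all of whose open neighbourhoods have positive measure. -/
def measureSupport {G : Type*} [TopologicalSpace G] [MeasurableSpace G] (μ : Measure G) :
    Set G :=
  {g : G | ∀ U : Set G, IsOpen U → g ∈ U → 0 < μ U}

/-- Let `G` be an abelian Polish group and `X ⊆ G` Haar null. Then there are a Borel set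
`B ⊇ X` and a Borel probability measure `μ` on `G` with compact support such that
`μ(B + g) = 0` for every `g ∈ G`; i.e. the witness measure in the definition of Haar
nullness may always be taken to have compact support. -/
theorem isHaarNull_witness_compact_support
    {G : Type*} [TopologicalSpace G] [PolishSpace G] [AddCommGroup G]
    [IsTopologicalAddGroup G] [MeasurableSpace G] [BorelSpace G]
    (X : Set G) (hX : IsHaarNull X) :
    ∃ B : Set G, MeasurableSet B ∧ X ⊆ B ∧
      ∃ μ : Measure G, IsProbabilityMeasure μ ∧ IsCompact (measureSupport μ) ∧
        ∀ g : G, μ ((fun b => b + g) '' B) = 0 := by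
  obtain ⟨B, hB, hXB, μ, hμ, h0⟩ := hX
  letI := upgradeIsCompletelyMetrizable G
  obtain ⟨K, hKc, hKpos⟩ := exists_compact_pos μ
  have hKmeas : MeasurableSet K := hKc.isClosed.measurableSet
  have hKne_top : μ K ≠ ∞ := (measure_lt_top μ K).ne
  set ν : Measure G := (μ K)⁻¹ • μ.restrict K with hν
  have hνprob : IsProbabilityMeasure ν := by
    constructor
    rw [hν, Measure.smul_apply, Measure.restrict_apply_univ, smul_eq_mul,
      ENNReal.inv_mul_cancel hKpos.ne' hKne_top]
  have hle : ∀ A : Set G, ν A ≤ (μ K)⁻¹ * μ A := by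
    intro A
    rw [hν, Measure.smul_apply, smul_eq_mul]
    exact mul_le_mul_right (Measure.le_iff'.1 Measure.restrict_le_self A) _
  refine ⟨B, hB, hXB, ν, hνprob, ?_, ?_⟩
  · -- compact support
    have hsub : measureSupport ν ⊆ K := by
      intro g hg
      by_contra hgK
      have := hg Kᶜ hKc.isClosed.isOpen_compl hgK
      rw [hν, Measure.smul_apply, Measure.restrict_apply (hKmeas.compl), smul_eq_mul,
        Set.compl_inter_self, measure_empty, mul_zero] at this
      exact lt_irrefl _ this
    have hclosed : IsClosed (measureSupport ν) := by
      rw [← isOpen_compl_iff, isOpen_iff_mem_nhds]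
      intro g hg
      simp only [measureSupport, Set.mem_compl_iff, Set.mem_setOf_eq, not_forall] at hg
      obtain ⟨U, hU, hgU, hνU⟩ := hg
      rw [not_lt, le_zero_iff] at hνU
      refine Filter.mem_of_superset (hU.mem_nhds hgU) ?_
      intro x hx
      simp only [measureSupport, Set.mem_compl_iff, Set.mem_setOf_eq, not_forall]
      exact ⟨U, hU, hx, by rw [not_lt, le_zero_iff]; exact hνU⟩
    exact hKc.of_isClosed_subset hclosed hsub
  · intro g
    have := hle ((fun b => b + g) '' B)
    rw [h0 g, mul_zero] at this
    exact le_antisymm this (zero_le)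
end

section
/- Let G be an abelian Polish group. Then every σ-compact Haar null subset of G is contained in a Gδ Haar null set. -/
open MeasureTheory

open Set Filter Topology Pointwise
open scoped ENNReal

private lemma geom_half : ∑' n : ℕ, (2⁻¹ : ℝ≥0∞) ^ (n + 1) = 1 := by
  simp_rw [pow_succ]
  rw [ENNReal.tsum_mul_right, ENNReal.tsum_geometric, ENNReal.one_sub_inv_two,
    inv_inv, ENNReal.mul_inv_cancel two_ne_zero ENNReal.ofNat_ne_top]

private lemma tight_aux {α : Type*} [MetricSpace α] [CompleteSpace α]
    [SecondCountableTopology α] [MeasurableSpace α] [OpensMeasurableSpace α]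
    (μ : Measure α) [IsFiniteMeasure μ] {ε : ℝ≥0∞} (hε : ε ≠ 0) :
    ∃ K : Set α, IsCompact K ∧ μ Kᶜ < ε := by
  rcases isEmpty_or_nonempty α with h | h
  · refine ⟨∅, isCompact_empty, ?_⟩
    have : (∅ : Set α)ᶜ = (∅ : Set α) := by
      ext x; exact absurd trivial (by exact fun _ => (h.false x).elim)
    rw [this, measure_empty]
    exact hε.bot_lt
  obtain ⟨x, hx⟩ := TopologicalSpace.exists_dense_seq α
  obtain ⟨δ, hδ0, hδε⟩ := exists_between hε.bot_lt
  -- the approximating sets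
  set A : ℕ → ℕ → Set α := fun n N => ⋃ i ∈ Finset.range (N + 1),
    Metric.closedBall (x i) (1 / (n + 1)) with hA
  have hAmeas : ∀ n N, MeasurableSet (A n N) := fun n N =>
    (Finset.range (N + 1)).measurableSet_biUnion fun i _ => measurableSet_closedBall
  have hAclosed : ∀ n N, IsClosed (A n N) := fun n N =>
    (Finset.range (N + 1)).finite_toSet.isClosed_biUnion fun i _ => Metric.isClosed_closedBall
  have hAmono : ∀ n, Monotone (A n) := by
    intro n N M hNM
    apply Set.iUnion_mono
    intro i
    apply Set.iUnion_subset
    intro hi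
    apply Set.subset_iUnion_of_subset (Finset.mem_range.2 (lt_of_lt_of_le (Finset.mem_range.1 hi) (by omega)))
    exact subset_rfl
  have hAunion : ∀ n, (⋃ N, A n N) = univ := by
    intro n
    ext y
    simp only [mem_iUnion, mem_univ, iff_true]
    obtain ⟨i, hi⟩ := (Metric.denseRange_iff.1 hx) y (1 / (n + 1)) (by positivity)
    exact ⟨i, mem_biUnion (Finset.self_mem_range_succ i) (Metric.mem_closedBall.2 (le_of_lt hi))⟩
  -- choose N n with small complement
  have key : ∀ n : ℕ, ∃ N, μ (A n N)ᶜ < δ * 2⁻¹ ^ (n + 1) := by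
    intro n
    have h1 : Tendsto (fun N => μ (A n N)ᶜ) atTop (𝓝 (μ (⋂ N, (A n N)ᶜ))) :=
      tendsto_measure_iInter_atTop (fun N => ((hAmeas n N).compl).nullMeasurableSet)
        (fun N M hNM => compl_subset_compl.2 (hAmono n hNM))
        ⟨0, measure_ne_top μ _⟩
    have h2 : (⋂ N, (A n N)ᶜ) = (∅ : Set α) := by
      rw [← compl_iUnion, hAunion n, compl_univ]
    rw [h2, measure_empty] at h1
    have hpos : (0 : ℝ≥0∞) < δ * 2⁻¹ ^ (n + 1) := by
      exact ENNReal.mul_pos hδ0.ne' (by simp)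
    exact ((h1.eventually_lt_const hpos).and (eventually_ge_atTop 0)).exists.imp
      fun N hN => hN.1
  choose N hN using key
  refine ⟨⋂ n, A n (N n), ?_, ?_⟩
  · apply TotallyBounded.isCompact_of_isClosed
    · rw [Metric.totallyBounded_iff]
      intro r hr
      obtain ⟨n, hn⟩ := exists_nat_one_div_lt (half_pos hr)
      refine ⟨x '' {i | i < N n + 1}, (Set.finite_Iio _).image x, ?_⟩
      intro y hy
      have : y ∈ A n (N n) := mem_iInter.1 hy n
      simp only [hA, mem_iUnion, Finset.mem_range] at this
      obtain ⟨i, hi, hyi⟩ := this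
      refine mem_biUnion ⟨i, hi, rfl⟩ ?_
      have := Metric.mem_closedBall.1 hyi
      exact Metric.mem_ball.2 (lt_of_le_of_lt this (lt_trans hn (half_lt_self hr)))
    · exact isClosed_iInter fun n => hAclosed n (N n)
  · rw [compl_iInter]
    calc μ (⋃ n, (A n (N n))ᶜ) ≤ ∑' n, μ (A n (N n))ᶜ := measure_iUnion_le _
      _ ≤ ∑' n : ℕ, δ * 2⁻¹ ^ (n + 1) := ENNReal.tsum_le_tsum fun n => (hN n).le
      _ = δ := by
          rw [ENNReal.tsum_mul_left]
          rw [geom_half, mul_one]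
      _ < ε := hδε

private lemma key_lemma {G : Type*} [TopologicalSpace G] [PolishSpace G] [AddCommGroup G]
    [IsTopologicalAddGroup G] [MeasurableSpace G] [BorelSpace G]
    (μ : Measure G) [IsProbabilityMeasure μ] {K : Set G} (hK : IsCompact K)
    (h0 : ∀ g : G, μ ((fun b => b + g) '' K) = 0) {ε : ℝ≥0∞} (hε : 0 < ε) :
    ∃ U : Set G, IsOpen U ∧ K ⊆ U ∧ ∀ g : G, μ ((fun b => b + g) '' U) < ε := by
  by_contra hcon
  push_neg at hcon
  -- `hcon : ∀ U, IsOpen U → K ⊆ U → ∃ g, ε ≤ μ ((· + g) '' U)`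
  letI := TopologicalSpace.upgradeIsCompletelyMetrizable G
  -- an antitone basis of open neighborhoods of 0
  obtain ⟨V', hV'⟩ := (𝓝 (0 : G)).exists_antitone_basis
  set V : ℕ → Set G := fun n => interior (V' n) with hVdef
  have hVopen : ∀ n, IsOpen (V n) := fun n => isOpen_interior
  have hV0 : ∀ n, (0 : G) ∈ V n := fun n =>
    mem_interior_iff_mem_nhds.2 (hV'.mem n)
  have hVanti : Antitone V := fun n m h => interior_mono (hV'.2 h)
  have hVbasis : ∀ W ∈ 𝓝 (0 : G), ∃ n, V n ⊆ W := by
    intro W hW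
    obtain ⟨n, -, hn⟩ := hV'.1.mem_iff.1 hW
    exact ⟨n, interior_subset.trans hn⟩
  -- bad translates
  have hbad : ∀ n : ℕ, ∃ g : G, ε ≤ μ ((fun b => b + g) '' (K + V n)) := by
    intro n
    exact hcon (K + V n) (hVopen n |>.add_left) (fun k hk => ⟨k, hk, 0, hV0 n, add_zero k⟩)
  choose g hg using hbad
  have hε1 : ε ≤ 1 := (hg 0).trans prob_le_one
  -- a compact set of large measure
  obtain ⟨L, hLcomp, hLlt⟩ := tight_aux μ hε.ne'
  -- points in the intersection
  have hpts : ∀ n : ℕ, ∃ k ∈ K, ∃ v ∈ V n, k + v + g n ∈ L := by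
    intro n
    by_contra hemp
    push_neg at hemp
    have hsub : (fun b => b + g n) '' (K + V n) ⊆ Lᶜ := by
      rintro _ ⟨q, ⟨k, hk, v, hv, rfl⟩, rfl⟩
      exact hemp k hk v hv
    exact absurd ((hg n).trans (measure_mono hsub)) (not_le.2 hLlt)
  choose k hkK v hvV hL using hpts
  set l : ℕ → G := fun n => k n + v n + g n with hldef
  -- extract convergent subsequences
  obtain ⟨a, haL, φ₁, hφ₁mono, hφ₁⟩ := hLcomp.tendsto_subseq hL
  obtain ⟨b, hbK, φ₂, hφ₂mono, hφ₂⟩ := hK.tendsto_subseq (fun n => hkK (φ₁ n))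
  set φ : ℕ → ℕ := φ₁ ∘ φ₂ with hφdef
  have hφmono : StrictMono φ := hφ₁mono.comp hφ₂mono
  have hlφ : Tendsto (fun n => l (φ n)) atTop (𝓝 a) := hφ₁.comp hφ₂mono.tendsto_atTop
  have hkφ : Tendsto (fun n => k (φ n)) atTop (𝓝 b) := hφ₂
  have hvφ : Tendsto (fun n => v (φ n)) atTop (𝓝 0) := by
    intro W hW
    obtain ⟨m, hm⟩ := hVbasis W hW
    rw [Filter.mem_map]
    filter_upwards [eventually_ge_atTop m] with n hn
    exact hm (hVanti (hn.trans (hφmono.le_apply)) (hvV (φ n)))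
  have hgφ : Tendsto (fun n => g (φ n)) atTop (𝓝 (a - b)) := by
    have : (fun n => g (φ n)) = fun n => l (φ n) - k (φ n) - v (φ n) := by
      funext n
      show g (φ n) = (k (φ n) + v (φ n) + g (φ n)) - k (φ n) - v (φ n)
      abel
    rw [this]
    simpa using (hlφ.sub hkφ).sub hvφ
  set g₀ : G := a - b with hg₀def
  -- a small open set around `K + g₀`
  have hC : IsCompact ((fun b => b + g₀) '' K) := hK.image (continuous_add_right g₀)
  obtain ⟨W, hWsub, hWopen, hWμ⟩ :=
    Set.exists_isOpen_lt_of_lt ((fun b => b + g₀) '' K) ε (by rw [h0 g₀]; exact hε)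
  obtain ⟨V₀, hV₀, hV₀sub⟩ := compact_open_separated_add_right hC hWopen hWsub
  obtain ⟨V₁, hV₁, hV₁sub⟩ := exists_nhds_zero_half hV₀
  obtain ⟨m₁, hm₁⟩ := hVbasis V₁ hV₁
  have hev : ∀ᶠ n in atTop, g (φ n) - g₀ ∈ V₁ := by
    have : Tendsto (fun n => g (φ n) - g₀) atTop (𝓝 0) := by
      simpa using hgφ.sub (tendsto_const_nhds (x := g₀))
    exact this.eventually_mem hV₁
  obtain ⟨n, hn1, hn2⟩ := ((eventually_ge_atTop m₁).and hev).exists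
  -- the contradiction
  have hsubW : (fun x => x + g (φ n)) '' (K + V (φ n)) ⊆ W := by
    rintro _ ⟨q, ⟨k', hk', v', hv', rfl⟩, rfl⟩
    have h1 : k' + g₀ ∈ (fun b => b + g₀) '' K := ⟨k', hk', rfl⟩
    have h2 : v' + (g (φ n) - g₀) ∈ V₀ :=
      hV₁sub v' (hm₁ (hVanti (hn1.trans hφmono.le_apply) hv')) _ hn2
    have h3 : (k' + g₀) + (v' + (g (φ n) - g₀)) ∈ W := hV₀sub ⟨_, h1, _, h2, rfl⟩
    have heq : (k' + g₀) + (v' + (g (φ n) - g₀)) = k' + v' + g (φ n) := by abel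
    rwa [heq] at h3
  exact absurd ((hg (φ n)).trans (measure_mono hsubW)) (not_le.2 hWμ)

/-- Let `G` be an abelian Polish group. Then every σ-compact Haar null subset of `G` is
contained in a `Gδ` Haar null set. -/
theorem sigmaCompact_haarNull_subset_Gdelta_haarNull
    {G : Type*} [TopologicalSpace G] [PolishSpace G] [AddCommGroup G]
    [IsTopologicalAddGroup G] [MeasurableSpace G] [BorelSpace G]
    (X : Set G) (hXsc : IsSigmaCompact X) (hX : IsHaarNull X) :
    ∃ S : Set G, IsGδ S ∧ X ⊆ S ∧ IsHaarNull S := by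
  obtain ⟨K, hKc, hKU⟩ := hXsc
  obtain ⟨B, hBm, hXB, μ, hμ, hμ0⟩ := hX
  have h0 : ∀ (n : ℕ) (g : G), μ ((fun b => b + g) '' K n) = 0 := by
    intro n g
    refine le_antisymm (le_trans (measure_mono (Set.image_mono ?_)) (hμ0 g).le) zero_le
    exact (hKU ▸ Set.subset_iUnion K n).trans hXB
  have hpos : ∀ n m : ℕ, (0 : ℝ≥0∞) < 2⁻¹ ^ (n + m + 1) := fun n m => ENNReal.pow_pos (ENNReal.inv_pos.2 ENNReal.ofNat_ne_top) _
  choose U hUopen hUsub hUμ using fun n m : ℕ => key_lemma μ (hKc n) (h0 n) (hpos n m)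
  have hSgδ : IsGδ (⋂ m, ⋃ n, U n m) :=
    IsGδ.iInter fun m => (isOpen_iUnion fun n => hUopen n m).isGδ
  refine ⟨⋂ m, ⋃ n, U n m, hSgδ, ?_, ?_⟩
  · intro x hx
    rw [← hKU] at hx
    obtain ⟨n, hn⟩ := Set.mem_iUnion.1 hx
    exact Set.mem_iInter.2 fun m => Set.mem_iUnion.2 ⟨n, hUsub n m hn⟩
  · refine ⟨_, hSgδ.measurableSet, subset_rfl, μ, hμ, ?_⟩
    intro g
    have hle : ∀ m : ℕ, μ ((fun b => b + g) '' ⋂ m, ⋃ n, U n m) ≤ 2⁻¹ ^ m := by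
      intro m
      calc μ ((fun b => b + g) '' ⋂ m, ⋃ n, U n m)
          ≤ μ ((fun b => b + g) '' ⋃ n, U n m) :=
            measure_mono (Set.image_mono (Set.iInter_subset _ m))
        _ = μ (⋃ n, (fun b => b + g) '' U n m) := by rw [Set.image_iUnion]
        _ ≤ ∑' n, μ ((fun b => b + g) '' U n m) := measure_iUnion_le _
        _ ≤ ∑' n : ℕ, 2⁻¹ ^ (n + m + 1) := ENNReal.tsum_le_tsum fun n => (hUμ n m g).le
        _ = 2⁻¹ ^ m := by
            have hrw : ∀ n : ℕ, (2⁻¹ : ℝ≥0∞) ^ (n + m + 1) = 2⁻¹ ^ (n + 1) * 2⁻¹ ^ m := by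
              intro n
              rw [← pow_add]
              congr 1
              omega
            simp_rw [hrw]
            rw [ENNReal.tsum_mul_right, geom_half, one_mul]
    by_contra hne
    obtain ⟨m, hm⟩ := ENNReal.exists_inv_two_pow_lt hne
    exact absurd (hle m) (not_le.2 hm)
end

section
/- Let G be a locally compact abelian Polish group. Then every Haar null subset of G is contained in a Gδ Haar null set. -/
open MeasureTheory

/-- Let `G` be a locally compact abelian Polish group. Then every Haar null subset of `G` is
contained in a `Gδ` Haar null set. -/
theorem haarNull_subset_Gdelta_haarNull_of_locallyCompact
    {G : Type*} [TopologicalSpace G] [PolishSpace G] [AddCommGroup G]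
    [IsTopologicalAddGroup G] [MeasurableSpace G] [BorelSpace G]
    [LocallyCompactSpace G]
    (X : Set G) (hX : IsHaarNull X) :
    ∃ S : Set G, IsGδ S ∧ X ⊆ S ∧ IsHaarNull S := by
  obtain ⟨B, hBmeas, hXB, μ, hμprob, hμ⟩ := hX
  let K : TopologicalSpace.PositiveCompacts G := Classical.arbitrary _
  set ν := Measure.addHaarMeasure K with hνdef
  -- translated preimages of B are μ-null
  have key : ∀ g : G, μ ((fun y => y + g) ⁻¹' B) = 0 := by
    intro g
    have := hμ (-g)
    rwa [Set.image_add_right, neg_neg] at this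
  have hmeas : MeasurableSet ((fun p : G × G => p.1 + p.2) ⁻¹' B) :=
    measurable_add hBmeas
  -- Fubini: ν B = 0
  have hνB : ν B = 0 := by
    have h1 : (ν.prod μ) ((fun p : G × G => p.1 + p.2) ⁻¹' B) = 0 := by
      rw [Measure.prod_apply hmeas]
      have : ∀ x : G, μ (Prod.mk x ⁻¹' ((fun p : G × G => p.1 + p.2) ⁻¹' B)) = 0 := by
        intro x
        have : (Prod.mk x ⁻¹' ((fun p : G × G => p.1 + p.2) ⁻¹' B))
            = (fun y => y + x) ⁻¹' B := by
          ext y; simp [add_comm]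
        rw [this, key x]
      simp [this]
    have h2 : (ν.prod μ) ((fun p : G × G => p.1 + p.2) ⁻¹' B) = ν B := by
      rw [Measure.prod_apply_symm hmeas]
      have : ∀ y : G, ν ((fun x => (x, y)) ⁻¹' ((fun p : G × G => p.1 + p.2) ⁻¹' B))
          = ν B := by
        intro y
        have h3 : ((fun x => (x, y)) ⁻¹' ((fun p : G × G => p.1 + p.2) ⁻¹' B))
            = (fun x => x + y) ⁻¹' B := by ext x; simp
        rw [h3, measure_preimage_add_right]
      simp [this, measure_univ]
    rw [← h2, h1]
  -- Gδ null superset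
  have hU : ∀ n : ℕ, ∃ U : Set G, B ⊆ U ∧ IsOpen U ∧ ν U < ((n : ENNReal) + 1)⁻¹ := by
    intro n
    refine B.exists_isOpen_lt_of_lt _ ?_
    rw [hνB]
    simp [ENNReal.inv_pos]
  choose U hBU hUopen hUlt using hU
  refine ⟨⋂ n, U n, ?_, fun x hx => Set.mem_iInter.2 fun n => hBU n (hXB hx), ?_⟩
  · exact IsGδ.iInter_of_isOpen hUopen
  have hSmeas : MeasurableSet (⋂ n, U n) :=
    MeasurableSet.iInter fun n => (hUopen n).measurableSet
  have hνS : ν (⋂ n, U n) = 0 := by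
    by_contra h
    obtain ⟨n, hn⟩ := ENNReal.exists_inv_nat_lt h
    have h1 : ν (⋂ m, U m) ≤ ((n : ENNReal) + 1)⁻¹ :=
      le_trans (measure_mono (Set.iInter_subset _ n)) (hUlt n).le
    have h2 : ((n : ENNReal) + 1)⁻¹ ≤ ((n : ENNReal))⁻¹ :=
      ENNReal.inv_le_inv.2 (le_add_of_nonneg_right zero_le_one)
    exact absurd (lt_of_lt_of_le hn (h1.trans h2)) (lt_irrefl _)
  refine ⟨⋂ n, U n, hSmeas, le_refl _, ν.restrict K, ?_, ?_⟩
  · constructor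
    rw [Measure.restrict_apply_univ, Measure.addHaarMeasure_self]
  · intro g
    have him : ν ((fun b => b + g) '' (⋂ n, U n)) = 0 := by
      rw [Set.image_add_right, measure_preimage_add_right, hνS]
    exact le_antisymm (le_trans (Measure.restrict_le_self _) him.le) (zero_le)
end
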